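/- For the rooted binary trees T_a = (((5,(6,4)),3),((1,(8,2)),7)) and T_b = (((7,((4,2),6)),3),(8,(1,5))) on taxon set {1,…,8}: the maximum over all characters f using at most 2 states of (l_f(T_b) − l_f(T_a)) equals 3, and the maximum over all characters f using at most 2 states of (l_f(T_a) − l_f(T_b)) equals 2. Consequently d^2_MP(T_a,T_b) = 3, and for every character f using at most 2 states attaining d^2_MP(T_a,T_b) one has l_f(T_a) < l_f(T_b). -/

import Mathlib

namespace MPDist

/-- A rooted binary phylogenetic tree: leaves are labelled by taxa,
every internal vertex (including the root) has exactly two children. -/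
inductive PTree (X : Type) : Type
  | leaf : X → PTree X
  | node : PTree X → PTree X → PTree X

namespace PTree

/-- The list of leaf labels (taxa) of a tree. -/
def leaves {X : Type} : PTree X → List X
  | .leaf x => [x]
  | .node l r => l.leaves ++ r.leaves

/-- Relabelling of taxa. -/
def map {X Y : Type} (φ : X → Y) : PTree X → PTree Y
  | .leaf x => .leaf (φ x)
  | .node l r => .node (l.map φ) (r.map φ)

end PTree

/-- `T` is a phylogenetic tree on the taxon set `X`:
its leaves are bijectively labelled by the elements of `X`. -/
def IsPhylo {X : Type} (T : PTree X) : Prop :=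
  T.leaves.Nodup ∧ ∀ x : X, x ∈ T.leaves

/-- A state-labelled binary tree (an extension assigns a state to every vertex). -/
inductive ETree (C : Type) : Type
  | leaf : C → ETree C
  | node : C → ETree C → ETree C → ETree C

namespace ETree

/-- The state at the root. -/
def root {C : Type} : ETree C → C
  | .leaf c => c
  | .node c _ _ => c

/-- The number of edges `{u,v}` with different states at the two endpoints
(substitutions/mutations). -/
def changes {C : Type} [DecidableEq C] : ETree C → ℕ
  | .leaf _ => 0
  | .node c l r =>
      ((if l.root = c then 0 else 1) + (if r.root = c then 0 else 1)) +
        (l.changes + r.changes)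

end ETree

/-- `g` is an extension of the character `f` to the tree `T`: it has the same
shape as `T`, assigns a state to every vertex, and agrees with `f` on the taxa. -/
inductive IsExtension {X C : Type} (f : X → C) : PTree X → ETree C → Prop
  | leaf (x : X) : IsExtension f (.leaf x) (.leaf (f x))
  | node {l r : PTree X} {gl gr : ETree C} (c : C) :
      IsExtension f l gl → IsExtension f r gr →
      IsExtension f (.node l r) (.node c gl gr)

/-- The parsimony score `l_f(T)`: the minimum number of mutation edges
over all extensions of `f` to `T`. -/
noncomputable def pscore {X C : Type} [DecidableEq C] (f : X → C) (T : PTree X) : ℕ :=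
  sInf { k : ℕ | ∃ g : ETree C, IsExtension f T g ∧ g.changes = k }

/-- The MP distance `d_MP(T1,T2) = max_f |l_f(T1) − l_f(T2)|`, the maximum taken
over all characters `f` on the taxon set (states drawn from `ℕ`). -/
noncomputable def dMP {X : Type} (T1 T2 : PTree X) : ℕ :=
  sSup { k : ℕ | ∃ f : X → ℕ, k = ((pscore f T1 : ℤ) - (pscore f T2 : ℤ)).natAbs }

/-- `d^i_MP(T1,T2)`: as `dMP`, but over characters using at most `i` states. -/
noncomputable def dMPk {X : Type} (i : ℕ) (T1 T2 : PTree X) : ℕ :=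
  sSup { k : ℕ | ∃ f : X → Fin i, k = ((pscore f T1 : ℤ) - (pscore f T2 : ℤ)).natAbs }

/-- `max_f (l_f(T2) − l_f(T1))` over all characters `f`. -/
noncomputable def maxDiff {X : Type} (T1 T2 : PTree X) : ℤ :=
  sSup { d : ℤ | ∃ f : X → ℕ, d = (pscore f T2 : ℤ) - (pscore f T1 : ℤ) }

/-- `max_f (l_f(T2) − l_f(T1))` over all characters `f` with at most `i` states. -/
noncomputable def maxDiffk {X : Type} (i : ℕ) (T1 T2 : PTree X) : ℤ :=
  sSup { d : ℤ | ∃ f : X → Fin i, d = (pscore f T2 : ℤ) - (pscore f T1 : ℤ) }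

/-- `gap(T1,T2) = |max_f(l_f(T2)−l_f(T1)) − max_f(l_f(T1)−l_f(T2))|`. -/
noncomputable def gap {X : Type} (T1 T2 : PTree X) : ℤ :=
  |maxDiff T1 T2 - maxDiff T2 T1|

/-- `gap` restricted to characters with at most `i` states. -/
noncomputable def gapk {X : Type} (i : ℕ) (T1 T2 : PTree X) : ℤ :=
  |maxDiffk i T1 T2 - maxDiffk i T2 T1|

/-- `s` occurs as a (rooted) subtree of `t`. -/
inductive IsSubtree {X : Type} : PTree X → PTree X → Prop
  | refl (t : PTree X) : IsSubtree t t
  | left {s l r : PTree X} : IsSubtree s l → IsSubtree s (.node l r)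
  | right {s l r : PTree X} : IsSubtree s r → IsSubtree s (.node l r)

/-- Taxa `a`, `b` form a cherry of `T`: they are leaves with a common parent. -/
def IsCherry {X : Type} (T : PTree X) (a b : X) : Prop :=
  IsSubtree (.node (.leaf a) (.leaf b)) T

/-- Relabel a tree on taxa `ℕ` by shifting all labels up by `s` (fresh copies). -/
def shiftT (s : ℕ) (T : PTree ℕ) : PTree ℕ := T.map (fun x => x + s)

/-- `T_a = (((((2,3),4),5),6),1)` on taxa `{1,…,6}` (taxon `j` encoded as `j-1`). -/
def Ta6 : PTree ℕ :=
  .node (.node (.node (.node (.node (.leaf 1) (.leaf 2)) (.leaf 3)) (.leaf 4)) (.leaf 5)) (.leaf 0)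

/-- `T_b = ((((2,6),(3,4)),5),1)` on taxa `{1,…,6}` (taxon `j` encoded as `j-1`). -/
def Tb6 : PTree ℕ :=
  .node (.node (.node (.node (.leaf 1) (.leaf 5)) (.node (.leaf 2) (.leaf 3))) (.leaf 4)) (.leaf 0)

/-- `T_A`: two disjoint copies of `T_a` joined under a new root (12 taxa). -/
def TA12 : PTree ℕ := .node Ta6 (shiftT 6 Ta6)

/-- `T_B`: two disjoint copies of `T_b` joined under a new root (12 taxa). -/
def TB12 : PTree ℕ := .node Tb6 (shiftT 6 Tb6)

/-- `TkA k` is the tree `T^{k+1}_A`: `k+1` disjoint copies of `T_A` arranged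
along a caterpillar backbone (so `TkA 0 = T^1_A = T_A`). -/
def TkA : ℕ → PTree ℕ
  | 0 => TA12
  | k+1 => .node (TkA k) (shiftT (12*(k+1)) TA12)

/-- `TkB k` is the tree `T^{k+1}_B`. -/
def TkB : ℕ → PTree ℕ
  | 0 => TB12
  | k+1 => .node (TkB k) (shiftT (12*(k+1)) TB12)

/-- `T_a = (((5,(6,4)),3),((1,(8,2)),7))` on taxa `{1,…,8}` (taxon `j` encoded as `j-1`). -/
def Ta8 : PTree ℕ :=
  .node (.node (.node (.leaf 4) (.node (.leaf 5) (.leaf 3))) (.leaf 2))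
        (.node (.node (.leaf 0) (.node (.leaf 7) (.leaf 1))) (.leaf 6))

/-- `T_b = (((7,((4,2),6)),3),(8,(1,5)))` on taxa `{1,…,8}` (taxon `j` encoded as `j-1`). -/
def Tb8 : PTree ℕ :=
  .node (.node (.node (.leaf 6) (.node (.node (.leaf 3) (.leaf 1)) (.leaf 5))) (.leaf 2))
        (.node (.leaf 7) (.node (.leaf 0) (.leaf 4)))

/-- `T_A` (2-state construction): two disjoint copies of `T_a` under a new root (16 taxa). -/
def TA16 : PTree ℕ := .node Ta8 (shiftT 8 Ta8)

/-- `T_B` (2-state construction): two disjoint copies of `T_b` under a new root (16 taxa). -/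
def TB16 : PTree ℕ := .node Tb8 (shiftT 8 Tb8)

/-- `T_AA`: two disjoint copies of `T_A` under a new root (32 taxa). -/
def TAA : PTree ℕ := .node TA16 (shiftT 16 TA16)

/-- `T_BB`: two disjoint copies of `T_B` under a new root (32 taxa). -/
def TBB : PTree ℕ := .node TB16 (shiftT 16 TB16)

/-- `TkAA k` is the tree `T^{k+1}_AA` (so `TkAA 0 = T^1_AA = T_AA`). -/
def TkAA : ℕ → PTree ℕ
  | 0 => TAA
  | k+1 => .node (TkAA k) (shiftT (32*(k+1)) TAA)

/-- `TkBB k` is the tree `T^{k+1}_BB`. -/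
def TkBB : ℕ → PTree ℕ
  | 0 => TBB
  | k+1 => .node (TkBB k) (shiftT (32*(k+1)) TBB)



/-! ### Auxiliary development: a verified DP for 2-state parsimony -/

section Aux

local notation "E" => WithTop ℕ

/-- DP: minimum number of changes given the root state (0 resp. 1); `⊤` if infeasible. -/
def mc {X : Type} (f : X → Fin 2) : PTree X → E × E
  | .leaf x => if f x = 0 then (0, ⊤) else (⊤, 0)
  | .node l r =>
      (min (mc f l).1 ((mc f l).2 + 1) + min (mc f r).1 ((mc f r).2 + 1),
       min ((mc f l).1 + 1) (mc f l).2 + min ((mc f r).1 + 1) (mc f r).2)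

/-- Cost indexed by root state. -/
def cost {X : Type} (f : X → Fin 2) (T : PTree X) (c : Fin 2) : E :=
  if c = 0 then (mc f T).1 else (mc f T).2

lemma fin2cases (c : Fin 2) : c = 0 ∨ c = 1 := by omega

lemma mc_lt_top {X : Type} (f : X → Fin 2) (T : PTree X) :
    min (mc f T).1 (mc f T).2 < ⊤ := by
  induction T with
  | leaf x => simp only [mc]; split <;> simp
  | node l r ihl ihr =>
    rw [min_lt_iff] at ihl ihr ⊢
    left
    have h1 : min (mc f l).1 ((mc f l).2 + 1) < ⊤ := by
      rcases ihl with h | h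
      · exact lt_of_le_of_lt (min_le_left _ _) h
      · exact lt_of_le_of_lt (min_le_right _ _) (by simpa [WithTop.add_lt_top] using h)
    have h2 : min (mc f r).1 ((mc f r).2 + 1) < ⊤ := by
      rcases ihr with h | h
      · exact lt_of_le_of_lt (min_le_left _ _) h
      · exact lt_of_le_of_lt (min_le_right _ _) (by simpa [WithTop.add_lt_top] using h)
    exact WithTop.add_lt_top.2 ⟨h1, h2⟩

lemma min_le_cost {X : Type} (f : X → Fin 2) (T : PTree X) (c : Fin 2) :
    min (mc f T).1 (mc f T).2 ≤ cost f T c := by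
  unfold cost; split
  · exact min_le_left _ _
  · exact min_le_right _ _

lemma step_le (p : E × E) (c root : Fin 2) (n : ℕ)
    (h : (if root = 0 then p.1 else p.2) ≤ (n : E)) :
    (if c = 0 then min p.1 (p.2 + 1) else min (p.1 + 1) p.2) ≤
      ((if root = c then (0 : ℕ) else 1) : E) + (n : E) := by
  rcases fin2cases c with hc | hc <;> rcases fin2cases root with hr | hr <;>
    subst hc <;> subst hr <;> simp only [if_pos rfl, if_true, reduceIte] at h ⊢
  · simpa using le_trans (min_le_left _ _) h
  · refine le_trans (min_le_right _ _) ?_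
    refine le_trans (add_le_add_left h 1) (le_of_eq ?_)
    rw [if_neg (by decide : ¬((1 : Fin 2) = 0))]
    push_cast
    exact add_comm _ _
  · refine le_trans (min_le_left _ _) ?_
    refine le_trans (add_le_add_left h 1) (le_of_eq ?_)
    rw [if_neg (by decide : ¬((0 : Fin 2) = 1))]
    push_cast
    exact add_comm _ _
  · simpa using le_trans (min_le_right _ _) h

lemma cost_node {X : Type} (f : X → Fin 2) (l r : PTree X) (c : Fin 2) :
    cost f (PTree.node l r) c =
      (if c = 0 then min (mc f l).1 ((mc f l).2 + 1) else min ((mc f l).1 + 1) (mc f l).2) +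
      (if c = 0 then min (mc f r).1 ((mc f r).2 + 1) else min ((mc f r).1 + 1) (mc f r).2) := by
  rcases fin2cases c with h | h <;> subst h <;> simp [cost, mc]

/-- Lower bound: any extension has at least `cost f T (root)` changes. -/
lemma cost_le_changes {X : Type} (f : X → Fin 2) {T : PTree X} {g : ETree (Fin 2)}
    (h : IsExtension f T g) : cost f T g.root ≤ (g.changes : E) := by
  induction h with
  | leaf x =>
    simp only [ETree.root, ETree.changes, cost, mc, Nat.cast_zero]
    rcases fin2cases (f x) with h0 | h0 <;> simp [h0]
  | @node l r gl gr c hl hr ihl ihr =>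
    have Hl := step_le (mc f l) c gl.root gl.changes ihl
    have Hr := step_le (mc f r) c gr.root gr.changes ihr
    show cost f (PTree.node l r) c ≤ _
    rw [cost_node]
    simp only [ETree.changes]
    push_cast at Hl Hr ⊢
    rw [add_add_add_comm]
    exact add_le_add Hl Hr

/-- Upper bound: a feasible root state is realized by an extension of optimal cost. -/
lemma exists_extension_le {X : Type} (f : X → Fin 2) (T : PTree X) :
    ∀ c : Fin 2, cost f T c ≠ ⊤ →
      ∃ g : ETree (Fin 2), IsExtension f T g ∧ g.root = c ∧ (g.changes : E) ≤ cost f T c := by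
  induction T with
  | leaf x =>
    intro c hc
    have hfx : c = f x := by
      by_contra hne
      apply hc
      unfold cost mc
      rcases fin2cases c with h0 | h0 <;> rcases fin2cases (f x) with h1 | h1 <;>
        subst h0 <;> simp_all
    refine ⟨.leaf (f x), IsExtension.leaf x, hfx ▸ rfl, ?_⟩
    simp only [ETree.changes, Nat.cast_zero]
    exact zero_le
  | node l r ihl ihr =>
    intro c hc
    rw [cost_node] at hc ⊢
    have hA := (WithTop.add_ne_top.1 hc).1
    have hB := (WithTop.add_ne_top.1 hc).2
    have child : ∀ (t : PTree X),
        (∀ c : Fin 2, cost f t c ≠ ⊤ →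
          ∃ g : ETree (Fin 2), IsExtension f t g ∧ g.root = c ∧ (g.changes : E) ≤ cost f t c) →
        (if c = 0 then min (mc f t).1 ((mc f t).2 + 1)
          else min ((mc f t).1 + 1) (mc f t).2) ≠ ⊤ →
        ∃ g : ETree (Fin 2), IsExtension f t g ∧
          ((if g.root = c then (0 : ℕ) else 1) : E) + (g.changes : E) ≤
          (if c = 0 then min (mc f t).1 ((mc f t).2 + 1)
            else min ((mc f t).1 + 1) (mc f t).2) := by
      intro t iht hAt
      rcases fin2cases c with h0 | h0 <;> subst h0
      · rw [if_pos rfl] at hAt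
        rw [if_pos rfl]
        by_cases hle : (mc f t).1 ≤ (mc f t).2 + 1
        · rw [min_eq_left hle] at hAt ⊢
          obtain ⟨g, hg, hroot, hch⟩ := iht 0 (by simpa [cost] using hAt)
          refine ⟨g, hg, ?_⟩
          have hc0 : cost f t 0 = (mc f t).1 := by simp [cost]
          rw [hc0] at hch
          simpa [hroot] using hch
        · rw [min_eq_right (le_of_not_ge hle)] at hAt ⊢
          have h2 : (mc f t).2 ≠ ⊤ := fun h => hAt (by simp [h])
          obtain ⟨g, hg, hroot, hch⟩ := iht 1 (by simpa [cost] using h2)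
          refine ⟨g, hg, ?_⟩
          have hc1 : cost f t 1 = (mc f t).2 := by simp [cost]
          rw [hc1] at hch
          rw [hroot, if_neg (by decide : ¬((1 : Fin 2) = 0))]
          push_cast
          calc (1 : E) + (g.changes : E) ≤ 1 + (mc f t).2 := add_le_add_right hch _
            _ = (mc f t).2 + 1 := add_comm _ _
      · rw [if_neg (by decide : ¬((1 : Fin 2) = 0))] at hAt
        rw [if_neg (by decide : ¬((1 : Fin 2) = 0))]
        by_cases hle : (mc f t).2 ≤ (mc f t).1 + 1
        · rw [min_eq_right hle] at hAt ⊢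
          obtain ⟨g, hg, hroot, hch⟩ := iht 1 (by simpa [cost] using hAt)
          refine ⟨g, hg, ?_⟩
          have hc1 : cost f t 1 = (mc f t).2 := by simp [cost]
          rw [hc1] at hch
          simpa [hroot] using hch
        · rw [min_eq_left (le_of_not_ge hle)] at hAt ⊢
          have h2 : (mc f t).1 ≠ ⊤ := fun h => hAt (by simp [h])
          obtain ⟨g, hg, hroot, hch⟩ := iht 0 (by simpa [cost] using h2)
          refine ⟨g, hg, ?_⟩
          have hc0 : cost f t 0 = (mc f t).1 := by simp [cost]
          rw [hc0] at hch
          rw [hroot, if_neg (by decide : ¬((0 : Fin 2) = 1))]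
          push_cast
          calc (1 : E) + (g.changes : E) ≤ 1 + (mc f t).1 := add_le_add_right hch _
            _ = (mc f t).1 + 1 := add_comm _ _
    obtain ⟨gl, hgl, hchl⟩ := child l ihl hA
    obtain ⟨gr, hgr, hchr⟩ := child r ihr hB
    refine ⟨.node c gl gr, IsExtension.node c hgl hgr, rfl, ?_⟩
    simp only [ETree.changes]
    push_cast at hchl hchr ⊢
    rw [add_add_add_comm]
    exact add_le_add hchl hchr

/-- The minimum parsimony score via the DP. -/
def msc {X : Type} (f : X → Fin 2) (T : PTree X) : ℕ :=
  (min (mc f T).1 (mc f T).2).untopD 0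

lemma pscore_eq_msc {X : Type} (f : X → Fin 2) (T : PTree X) :
    pscore f T = msc f T := by
  have hlt := mc_lt_top f T
  obtain ⟨n, hn⟩ : ∃ n : ℕ, min (mc f T).1 (mc f T).2 = (n : E) := by
    obtain ⟨n, hn⟩ := WithTop.ne_top_iff_exists.1 (ne_top_of_lt hlt)
    exact ⟨n, hn.symm⟩
  have hboundall : ∀ g : ETree (Fin 2), IsExtension f T g → n ≤ g.changes := by
    intro g hg
    have h1 : (n : E) ≤ (g.changes : E) := by
      rw [← hn]
      exact le_trans (min_le_cost f T g.root) (cost_le_changes f hg)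
    exact_mod_cast h1
  have hmem : ∃ g : ETree (Fin 2), IsExtension f T g ∧ g.changes = n := by
    rcases le_total (mc f T).1 (mc f T).2 with hle | hle
    · have hmin : cost f T 0 = (n : E) := by
        rw [show cost f T 0 = (mc f T).1 from by simp [cost], ← min_eq_left hle, hn]
      obtain ⟨g, hg, _, hch⟩ := exists_extension_le f T 0 (by simp [hmin])
      rw [hmin] at hch
      have h2 : g.changes ≤ n := by exact_mod_cast hch
      exact ⟨g, hg, le_antisymm h2 (hboundall g hg)⟩
    · have hmin : cost f T 1 = (n : E) := by
        rw [show cost f T 1 = (mc f T).2 from by simp [cost], ← min_eq_right hle, hn]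
      obtain ⟨g, hg, _, hch⟩ := exists_extension_le f T 1 (by simp [hmin])
      rw [hmin] at hch
      have h2 : g.changes ≤ n := by exact_mod_cast hch
      exact ⟨g, hg, le_antisymm h2 (hboundall g hg)⟩
  have hmsc : msc f T = n := by
    rw [msc, hn]
    rfl
  rw [hmsc, pscore]
  refine le_antisymm (Nat.sInf_le hmem) (le_csInf ⟨n, hmem⟩ ?_)
  rintro k ⟨g, hg, rfl⟩
  exact hboundall g hg

lemma mc_congr {X : Type} (f f' : X → Fin 2) (T : PTree X)
    (h : ∀ x ∈ T.leaves, f x = f' x) : mc f T = mc f' T := by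
  induction T with
  | leaf x => simp only [mc, h x (by simp [PTree.leaves])]
  | node l r ihl ihr =>
    have hl := ihl fun x hx => h x (by simp [PTree.leaves, hx])
    have hr := ihr fun x hx => h x (by simp [PTree.leaves, hx])
    simp only [mc, hl, hr]

/-- Restriction of a character to the first 8 taxa. -/
def charv (v : Fin 8 → Fin 2) : ℕ → Fin 2 := fun n => if h : n < 8 then v ⟨n, h⟩ else 0

set_option maxRecDepth 100000 in
lemma key_bounds : ∀ v : Fin 8 → Fin 2,
    msc (charv v) Tb8 ≤ msc (charv v) Ta8 + 3 ∧
    msc (charv v) Ta8 ≤ msc (charv v) Tb8 + 2 := by decide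

lemma leaves_lt8_a : ∀ x ∈ Ta8.leaves, x < 8 := by decide
lemma leaves_lt8_b : ∀ x ∈ Tb8.leaves, x < 8 := by decide

lemma pscore_charv_a (f : ℕ → Fin 2) :
    pscore f Ta8 = msc (charv fun i => f i.val) Ta8 := by
  rw [pscore_eq_msc, msc, msc, mc_congr f (charv fun i => f i.val) Ta8]
  intro x hx
  have hx8 := leaves_lt8_a x hx
  simp [charv, hx8]

lemma pscore_charv_b (f : ℕ → Fin 2) :
    pscore f Tb8 = msc (charv fun i => f i.val) Tb8 := by
  rw [pscore_eq_msc, msc, msc, mc_congr f (charv fun i => f i.val) Tb8]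
  intro x hx
  have hx8 := leaves_lt8_b x hx
  simp [charv, hx8]

/-- Witness achieving `l(T_b) - l(T_a) = 3`. -/
def w3 : ℕ → Fin 2 := fun n => if n = 2 ∨ n = 3 ∨ n = 4 ∨ n = 5 then 1 else 0
/-- Witness achieving `l(T_a) - l(T_b) = 2`. -/
def w2 : ℕ → Fin 2 := fun n => if n = 2 ∨ n = 5 ∨ n = 6 ∨ n = 7 then 1 else 0

lemma w3_a : pscore w3 Ta8 = 1 := by rw [pscore_eq_msc]; decide
lemma w3_b : pscore w3 Tb8 = 4 := by rw [pscore_eq_msc]; decide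
lemma w2_a : pscore w2 Ta8 = 4 := by rw [pscore_eq_msc]; decide
lemma w2_b : pscore w2 Tb8 = 2 := by rw [pscore_eq_msc]; decide

lemma diff_le3 (f : ℕ → Fin 2) : pscore f Tb8 ≤ pscore f Ta8 + 3 := by
  rw [pscore_charv_a, pscore_charv_b]
  exact (key_bounds _).1

lemma diff_le2 (f : ℕ → Fin 2) : pscore f Ta8 ≤ pscore f Tb8 + 2 := by
  rw [pscore_charv_a, pscore_charv_b]
  exact (key_bounds _).2

end Aux

/-- for `T_a = (((5,(6,4)),3),((1,(8,2)),7))` and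
`T_b = (((7,((4,2),6)),3),(8,(1,5)))` and characters with at most 2 states:
`max_f (l_f(T_b) − l_f(T_a)) = 3`, `max_f (l_f(T_a) − l_f(T_b)) = 2`, hence
`d^2_MP(T_a,T_b) = 3` and every optimal 2-state character `f` has
`l_f(T_a) < l_f(T_b)`. -/
theorem Ta8_Tb8_asymmetric :
    maxDiffk 2 Ta8 Tb8 = 3 ∧
    maxDiffk 2 Tb8 Ta8 = 2 ∧
    dMPk 2 Ta8 Tb8 = 3 ∧
    (∀ f : ℕ → Fin 2,
      ((pscore f Ta8 : ℤ) - (pscore f Tb8 : ℤ)).natAbs = dMPk 2 Ta8 Tb8 →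
      pscore f Ta8 < pscore f Tb8) := by
  have hmd1 : maxDiffk 2 Ta8 Tb8 = 3 := by
    have mem3 : (3 : ℤ) ∈ { d : ℤ | ∃ f : ℕ → Fin 2,
        d = (pscore f Tb8 : ℤ) - (pscore f Ta8 : ℤ) } := ⟨w3, by rw [w3_a, w3_b]; norm_num⟩
    have ub3 : ∀ d ∈ { d : ℤ | ∃ f : ℕ → Fin 2,
        d = (pscore f Tb8 : ℤ) - (pscore f Ta8 : ℤ) }, d ≤ 3 := by
      rintro d ⟨f, rfl⟩
      have := diff_le3 f
      omega
    exact le_antisymm (csSup_le ⟨3, mem3⟩ ub3) (le_csSup ⟨3, ub3⟩ mem3)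
  have hmd2 : maxDiffk 2 Tb8 Ta8 = 2 := by
    have mem2 : (2 : ℤ) ∈ { d : ℤ | ∃ f : ℕ → Fin 2,
        d = (pscore f Ta8 : ℤ) - (pscore f Tb8 : ℤ) } := ⟨w2, by rw [w2_a, w2_b]; norm_num⟩
    have ub2 : ∀ d ∈ { d : ℤ | ∃ f : ℕ → Fin 2,
        d = (pscore f Ta8 : ℤ) - (pscore f Tb8 : ℤ) }, d ≤ 2 := by
      rintro d ⟨f, rfl⟩
      have := diff_le2 f
      omega
    exact le_antisymm (csSup_le ⟨2, mem2⟩ ub2) (le_csSup ⟨2, ub2⟩ mem2)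
  have hd : dMPk 2 Ta8 Tb8 = 3 := by
    have mem : (3 : ℕ) ∈ { k : ℕ | ∃ f : ℕ → Fin 2,
        k = ((pscore f Ta8 : ℤ) - (pscore f Tb8 : ℤ)).natAbs } :=
      ⟨w3, by rw [w3_a, w3_b]; rfl⟩
    have ub : ∀ k ∈ { k : ℕ | ∃ f : ℕ → Fin 2,
        k = ((pscore f Ta8 : ℤ) - (pscore f Tb8 : ℤ)).natAbs }, k ≤ 3 := by
      rintro k ⟨f, rfl⟩
      have h1 := diff_le3 f
      have h2 := diff_le2 f
      omega
    exact le_antisymm (csSup_le ⟨3, mem⟩ ub) (le_csSup ⟨3, ub⟩ mem)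
  refine ⟨hmd1, hmd2, hd, ?_⟩
  intro f hf
  rw [hd] at hf
  have h2 := diff_le2 f
  omega

end MPDist
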